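/- For fixed θ ∈ ℝ₊ⁿ, the map λ ↦ p_S(λθ)/λ is decreasing on (0,∞), under the assumptions that for each fixed aᵢ the map θᵢ ↦ (1/θᵢ)·∂v̄ᵢ(aᵢ,θᵢ)/∂aᵢ is decreasing, and the regularity assumptions guaranteeing the envelope-theorem formula for ∂p_S/∂θᵢ. -/

import Mathlib

open Finset Filter Topology

namespace PSscalingAux

variable {n : ℕ}


variable {n : ℕ}

def K (n : ℕ) : Set (Fin n → ℝ) := {a | (∀ j, 0 ≤ a j) ∧ ∑ j, a j ≤ 1}

def Km (i : Fin n) : Set (Fin n → ℝ) :=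
  {a | (∀ j, 0 ≤ a j) ∧ ∑ j ∈ Finset.univ.erase i, a j ≤ 1}

lemma K_le_one {a : Fin n → ℝ} (ha : a ∈ K n) (j : Fin n) : a j ≤ 1 :=
  le_trans (Finset.single_le_sum (fun k _ => ha.1 k) (mem_univ j)) ha.2

lemma Km_le_one {i : Fin n} {a : Fin n → ℝ} (ha : a ∈ Km i) {j : Fin n} (hj : j ≠ i) :
    a j ≤ 1 :=
  le_trans (Finset.single_le_sum (fun k _ => ha.1 k) (by simp [Finset.mem_erase, hj])) ha.2

lemma concave_increment {w : ℝ → ℝ} (hw : ConcaveOn ℝ (Set.Icc (0:ℝ) 1) w)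
    {p q d : ℝ} (hp : 0 ≤ p) (hpq : p ≤ q) (hd : 0 ≤ d) (hq : q + d ≤ 1) :
    w (q + d) - w q ≤ w (p + d) - w p := by
  set L := q + d - p with hL
  rcases eq_or_lt_of_le (by linarith : (0:ℝ) ≤ L) with h0 | h0
  · have hd0 : d = 0 := by nlinarith
    have hqp : q = p := by nlinarith
    simp [hd0, hqp]
  · set μ := d / L with hμdef
    have hμ : 0 ≤ μ := div_nonneg hd h0.le
    have hμ1 : μ ≤ 1 := (div_le_one h0).2 (by linarith)
    have hmem1 : p ∈ Set.Icc (0:ℝ) 1 := ⟨hp, by linarith⟩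
    have hmem2 : q + d ∈ Set.Icc (0:ℝ) 1 := ⟨by linarith, hq⟩
    have hLne : L ≠ 0 := ne_of_gt h0
    have e1 : (1 - μ) * p + μ * (q + d) = p + d := by
      rw [hμdef]; linear_combination (div_mul_cancel₀ d hLne) - d / L * hL
    have e2 : μ * p + (1 - μ) * (q + d) = q := by
      rw [hμdef]; linear_combination -(div_mul_cancel₀ d hLne) + d / L * hL
    have h1 := hw.2 hmem1 hmem2 (by linarith : (0:ℝ) ≤ 1 - μ) hμ (by ring)
    have h2 := hw.2 hmem1 hmem2 hμ (by linarith : (0:ℝ) ≤ 1 - μ) (by ring)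
    simp only [smul_eq_mul] at h1 h2
    rw [e1] at h1
    rw [e2] at h2
    linarith

lemma sum_comp_update (f : Fin n → ℝ → ℝ) {s : Finset (Fin n)} {j : Fin n} (hj : j ∈ s)
    (c : Fin n → ℝ) (v : ℝ) :
    ∑ k ∈ s, f k (Function.update c j v k) = (∑ k ∈ s, f k (c k)) - f j (c j) + f j v := by
  rw [← Finset.add_sum_erase _ (fun k => f k (Function.update c j v k)) hj,
      ← Finset.add_sum_erase _ (fun k => f k (c k)) hj]
  have : ∀ k ∈ s.erase j, f k (Function.update c j v k) = f k (c k) := by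
    intro k hk
    rw [Function.update_of_ne (Finset.ne_of_mem_erase hk)]
  rw [Finset.sum_congr rfl this]
  simp [Function.update_self]
  ring

lemma exists_dominating (g : Fin n → ℝ → ℝ)
    (hgc : ∀ j, ContinuousOn (g j) (Set.Icc 0 1))
    (hgm : ∀ j, MonotoneOn (g j) (Set.Icc 0 1))
    (hgcc : ∀ j, ConcaveOn ℝ (Set.Icc 0 1) (g j))
    (i : Fin n) {a : Fin n → ℝ} (ha : a ∈ K n)
    (hamax : ∀ c ∈ K n, (∑ j, g j (c j)) ≤ ∑ j, g j (a j)) :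
    ∃ b ∈ Km i, (∀ j, j ≠ i → a j ≤ b j) ∧
      ∀ c ∈ Km i, (∑ j ∈ univ.erase i, g j (c j)) ≤ ∑ j ∈ univ.erase i, g j (b j) := by
  classical
  set objm : (Fin n → ℝ) → ℝ := fun x => ∑ j ∈ univ.erase i, g j (x j) with hobjm
  set K' : Set (Fin n → ℝ) :=
    (Set.pi Set.univ fun j => Set.Icc (if j = i then 0 else a j) 1) ∩
      {x | ∑ j ∈ univ.erase i, x j ≤ 1} with hK'
  have hK'sub : ∀ x ∈ K', ∀ j, x j ∈ Set.Icc (0:ℝ) 1 := by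
    intro x hx j
    have h := hx.1 j trivial
    refine ⟨le_trans ?_ h.1, h.2⟩
    by_cases hj : j = i <;> simp [hj, ha.1 j]
  have hK'cpt : IsCompact K' :=
    (isCompact_univ_pi fun j => isCompact_Icc).inter_right
      (isClosed_le (continuous_finset_sum _ fun j _ => continuous_apply j) continuous_const)
  have haerase : ∑ j ∈ univ.erase i, a j ≤ 1 := by
    have h := Finset.add_sum_erase univ a (mem_univ i)
    have h2 := ha.1 i
    have h3 := ha.2
    linarith
  have hK'ne : K'.Nonempty := by
    refine ⟨Function.update a i 0, fun j _ => ?_, ?_⟩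
    · by_cases hj : j = i
      · subst hj; simp
      · rw [Function.update_of_ne hj]
        simp only [if_neg hj]
        exact ⟨le_refl _, K_le_one ha j⟩
    · have he : ∀ j ∈ univ.erase i, Function.update a i 0 j = a j := fun j hj =>
        Function.update_of_ne (Finset.ne_of_mem_erase hj) _ _
      simp only [Set.mem_setOf_eq]
      rw [Finset.sum_congr rfl he]
      exact haerase
  have hobjc : ContinuousOn objm K' := by
    apply continuousOn_finset_sum
    intro j _
    exact (hgc j).comp (continuous_apply j).continuousOn (fun x hx => hK'sub x hx j)
  obtain ⟨b, hbK', hbmax'⟩ := hK'cpt.exists_isMaxOn hK'ne hobjc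
  have hbmax : ∀ x ∈ K', objm x ≤ objm b := fun x hx => hbmax' hx
  have hbdom : ∀ j, j ≠ i → a j ≤ b j := by
    intro j hj
    have h := (hbK'.1 j trivial).1
    rwa [if_neg hj] at h
  have hbnn : ∀ j, 0 ≤ b j := by
    intro j
    have h := (hbK'.1 j trivial).1
    by_cases hj : j = i
    · rwa [if_pos hj] at h
    · rw [if_neg hj] at h
      exact le_trans (ha.1 j) h
  have hbKm : b ∈ Km i := ⟨hbnn, hbK'.2⟩
  have base : ∀ c ∈ Km i, (∀ j ∈ univ.erase i, a j ≤ c j) → objm c ≤ objm b := by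
    intro c hc hdom
    have hx : Function.update c i 0 ∈ K' := by
      refine ⟨fun j _ => ?_, ?_⟩
      · by_cases hj : j = i
        · subst hj; simp
        · rw [Function.update_of_ne hj]
          simp only [if_neg hj]
          exact ⟨hdom j (by simp [Finset.mem_erase, hj]), Km_le_one hc hj⟩
      · have he : ∀ j ∈ univ.erase i, Function.update c i 0 j = c j := fun j hj =>
          Function.update_of_ne (Finset.ne_of_mem_erase hj) _ _
        simp only [Set.mem_setOf_eq]
        rw [Finset.sum_congr rfl he]
        exact hc.2
    have heq : objm (Function.update c i 0) = objm c := by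
      apply Finset.sum_congr rfl
      intro j hj
      rw [Function.update_of_ne (Finset.ne_of_mem_erase hj)]
    calc objm c = objm (Function.update c i 0) := heq.symm
      _ ≤ objm b := hbmax _ hx
  have key : ∀ N : ℕ, ∀ c ∈ Km i,
      (((univ.erase i).filter fun j => c j < a j).card
        + ((univ.erase i).filter fun j => a j < c j).card) ≤ N →
      objm c ≤ objm b := by
    intro N
    induction N with
    | zero =>
      intro c hc hcard
      refine base c hc (fun j hj => ?_)
      by_contra hlt
      push_neg at hlt
      have hmem : j ∈ (univ.erase i).filter fun j => c j < a j := mem_filter.2 ⟨hj, hlt⟩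
      have := Finset.card_pos.2 ⟨j, hmem⟩
      omega
    | succ N ih =>
      intro c hc hcard
      by_cases hbelow : ∃ j ∈ univ.erase i, c j < a j
      · obtain ⟨j, hji, hcj⟩ := hbelow
        have hjne : j ≠ i := Finset.ne_of_mem_erase hji
        have hcj0 : 0 ≤ c j := hc.1 j
        have haj1 : a j ≤ 1 := K_le_one ha j
        by_cases habove : ∃ k ∈ univ.erase i, a k < c k
        · -- transfer case
          obtain ⟨k, hki, hak⟩ := habove
          have hkne : k ≠ i := Finset.ne_of_mem_erase hki
          have hjk : j ≠ k := by
            intro h; rw [h] at hcj; linarith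
          set δ : ℝ := min (a j - c j) (c k - a k) with hδdef
          have hδpos : 0 < δ := lt_min (by linarith) (by linarith)
          have hδ1 : δ ≤ a j - c j := min_le_left _ _
          have hδ2 : δ ≤ c k - a k := min_le_right _ _
          have hck1 : c k ≤ 1 := Km_le_one hc hkne
          have hak0 : 0 ≤ a k := ha.1 k
          set c' : Fin n → ℝ := Function.update (Function.update c k (c k - δ)) j (c j + δ)
            with hc'def
          have hc'j : c' j = c j + δ := by simp [hc'def]
          have hc'k : c' k = c k - δ := by
            rw [hc'def, Function.update_of_ne (Ne.symm hjk), Function.update_self]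
          have hc'other : ∀ ℓ, ℓ ≠ j → ℓ ≠ k → c' ℓ = c ℓ := by
            intro ℓ h1 h2
            rw [hc'def, Function.update_of_ne h1, Function.update_of_ne h2]
          -- feasibility
          have hsum : ∑ ℓ ∈ univ.erase i, c' ℓ = ∑ ℓ ∈ univ.erase i, c ℓ := by
            have h1 := sum_comp_update (fun _ x => x) hji (Function.update c k (c k - δ)) (c j + δ)
            have h2 := sum_comp_update (fun _ x => x) hki c (c k - δ)
            rw [hc'def, h1, h2, Function.update_of_ne hjk]
            ring
          have hc' : c' ∈ Km i := by
            refine ⟨fun ℓ => ?_, by rw [hsum]; exact hc.2⟩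
            by_cases h1 : ℓ = j
            · subst h1; rw [hc'j]; linarith
            · by_cases h2 : ℓ = k
              · subst h2; rw [hc'k]; linarith
              · rw [hc'other ℓ h1 h2]; exact hc.1 ℓ
          -- value identity
          have hval : objm c' = objm c - g k (c k) + g k (c k - δ) - g j (c j) + g j (c j + δ) := by
            have h1 := sum_comp_update g hji (Function.update c k (c k - δ)) (c j + δ)
            have h2 := sum_comp_update g hki c (c k - δ)
            rw [hobjm] at *
            simp only [hc'def]
            rw [h1, h2, Function.update_of_ne hjk]
          -- inequality A
          have hA : g k (c k) - g k (c k - δ) ≤ g k (a k + δ) - g k (a k) := by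
            have h := concave_increment (hgcc k) hak0 (by linarith : a k ≤ c k - δ)
              hδpos.le (by linarith : (c k - δ) + δ ≤ 1)
            have e : c k - δ + δ = c k := by ring
            rw [e] at h
            linarith
          -- inequality B (optimality of a)
          have hB' : g k (a k + δ) - g k (a k) ≤ g j (a j) - g j (a j - δ) := by
            set a'' : Fin n → ℝ := Function.update (Function.update a k (a k + δ)) j (a j - δ)
              with ha''def
            have ha''sum : ∑ ℓ, a'' ℓ = ∑ ℓ, a ℓ := by
              have h1 := sum_comp_update (fun _ x => x) (mem_univ j)
                (Function.update a k (a k + δ)) (a j - δ)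
              have h2 := sum_comp_update (fun _ x => x) (mem_univ k) a (a k + δ)
              rw [ha''def, h1, h2, Function.update_of_ne hjk]
              ring
            have ha'' : a'' ∈ K n := by
              refine ⟨fun ℓ => ?_, by rw [ha''sum]; exact ha.2⟩
              by_cases h1 : ℓ = j
              · subst h1
                rw [ha''def, Function.update_self]
                linarith
              · by_cases h2 : ℓ = k
                · subst h2
                  rw [ha''def, Function.update_of_ne hjk.symm, Function.update_self]
                  linarith
                · rw [ha''def, Function.update_of_ne h1, Function.update_of_ne h2]
                  exact ha.1 ℓ
            have hopt := hamax a'' ha''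
            have hexp : ∑ ℓ, g ℓ (a'' ℓ) =
                (∑ ℓ, g ℓ (a ℓ)) - g k (a k) + g k (a k + δ) - g j (a j) + g j (a j - δ) := by
              have h1 := sum_comp_update g (mem_univ j) (Function.update a k (a k + δ)) (a j - δ)
              have h2 := sum_comp_update g (mem_univ k) a (a k + δ)
              rw [ha''def, h1, h2, Function.update_of_ne hjk]
            rw [hexp] at hopt
            linarith
          -- inequality C
          have hC : g j (a j) - g j (a j - δ) ≤ g j (c j + δ) - g j (c j) := by
            have h := concave_increment (hgcc j) hcj0 (by linarith : c j ≤ a j - δ)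
              hδpos.le (by linarith : (a j - δ) + δ ≤ 1)
            have e : a j - δ + δ = a j := by ring
            rw [e] at h
            linarith
          have hvall : objm c ≤ objm c' := by
            rw [hval]; linarith
          -- cardinality bookkeeping
          have hsubb : ((univ.erase i).filter fun ℓ => c' ℓ < a ℓ) ⊆
              ((univ.erase i).filter fun ℓ => c ℓ < a ℓ) := by
            intro ℓ hℓ
            rw [mem_filter] at hℓ ⊢
            refine ⟨hℓ.1, ?_⟩
            by_cases h1 : ℓ = j
            · subst h1; exact hcj
            · by_cases h2 : ℓ = k
              · subst h2
                rw [hc'k] at hℓ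
                linarith [hℓ.2]
              · rw [hc'other ℓ h1 h2] at hℓ
                exact hℓ.2
          have hsuba : ((univ.erase i).filter fun ℓ => a ℓ < c' ℓ) ⊆
              ((univ.erase i).filter fun ℓ => a ℓ < c ℓ) := by
            intro ℓ hℓ
            rw [mem_filter] at hℓ ⊢
            refine ⟨hℓ.1, ?_⟩
            by_cases h1 : ℓ = j
            · subst h1
              rw [hc'j] at hℓ
              linarith [hℓ.2]
            · by_cases h2 : ℓ = k
              · subst h2; exact hak
              · rw [hc'other ℓ h1 h2] at hℓ
                exact hℓ.2
          have hcard' : (((univ.erase i).filter fun ℓ => c' ℓ < a ℓ).card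
              + ((univ.erase i).filter fun ℓ => a ℓ < c' ℓ).card) ≤ N := by
            rcases le_total (a j - c j) (c k - a k) with hmin | hmin
            · have hδeq : δ = a j - c j := min_eq_left hmin
              have hjnot : j ∉ ((univ.erase i).filter fun ℓ => c' ℓ < a ℓ) := by
                rw [mem_filter, hc'j, hδeq]
                simp
              have hjmem : j ∈ ((univ.erase i).filter fun ℓ => c ℓ < a ℓ) :=
                mem_filter.2 ⟨hji, hcj⟩
              have h1 : ((univ.erase i).filter fun ℓ => c' ℓ < a ℓ).card ≤
                  ((univ.erase i).filter fun ℓ => c ℓ < a ℓ).card - 1 := by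
                have hss := Finset.subset_erase.2 ⟨hsubb, hjnot⟩
                calc _ ≤ (((univ.erase i).filter fun ℓ => c ℓ < a ℓ).erase j).card :=
                      Finset.card_le_card hss
                  _ = _ := Finset.card_erase_of_mem hjmem
              have h2 := Finset.card_le_card hsuba
              have h3 := Finset.card_pos.2 ⟨j, hjmem⟩
              omega
            · have hδeq : δ = c k - a k := min_eq_right hmin
              have hknot : k ∉ ((univ.erase i).filter fun ℓ => a ℓ < c' ℓ) := by
                rw [mem_filter, hc'k, hδeq]
                simp
              have hkmem : k ∈ ((univ.erase i).filter fun ℓ => a ℓ < c ℓ) :=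
                mem_filter.2 ⟨hki, hak⟩
              have h1 : ((univ.erase i).filter fun ℓ => a ℓ < c' ℓ).card ≤
                  ((univ.erase i).filter fun ℓ => a ℓ < c ℓ).card - 1 := by
                have hss := Finset.subset_erase.2 ⟨hsuba, hknot⟩
                calc _ ≤ (((univ.erase i).filter fun ℓ => a ℓ < c ℓ).erase k).card :=
                      Finset.card_le_card hss
                  _ = _ := Finset.card_erase_of_mem hkmem
              have h2 := Finset.card_le_card hsubb
              have h3 := Finset.card_pos.2 ⟨k, hkmem⟩
              omega
          exact le_trans hvall (ih c' hc' hcard')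
        · -- slack case
          push_neg at habove
          set c' : Fin n → ℝ := Function.update c j (a j) with hc'def
          have hc'j : c' j = a j := by simp [hc'def]
          have hc'other : ∀ ℓ, ℓ ≠ j → c' ℓ = c ℓ := fun ℓ h =>
            Function.update_of_ne h _ _
          have hsumle : ∑ ℓ ∈ univ.erase i, c' ℓ ≤ ∑ ℓ ∈ univ.erase i, a ℓ := by
            apply Finset.sum_le_sum
            intro ℓ hℓ
            by_cases h1 : ℓ = j
            · subst h1; rw [hc'j]
            · rw [hc'other ℓ h1]
              exact habove ℓ hℓ
          have hc' : c' ∈ Km i := by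
            refine ⟨fun ℓ => ?_, le_trans hsumle haerase⟩
            by_cases h1 : ℓ = j
            · rw [h1, hc'j]; exact ha.1 j
            · rw [hc'other ℓ h1]; exact hc.1 ℓ
          have hval : objm c' = objm c - g j (c j) + g j (a j) := by
            rw [hobjm]
            simp only [hc'def]
            rw [sum_comp_update g hji c (a j)]
          have hvall : objm c ≤ objm c' := by
            rw [hval]
            have := hgm j (Set.mem_Icc.2 ⟨hcj0, Km_le_one hc hjne⟩)
              (Set.mem_Icc.2 ⟨ha.1 j, haj1⟩) hcj.le
            linarith
          have hsubb : ((univ.erase i).filter fun ℓ => c' ℓ < a ℓ) ⊆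
              ((univ.erase i).filter fun ℓ => c ℓ < a ℓ) := by
            intro ℓ hℓ
            rw [mem_filter] at hℓ ⊢
            refine ⟨hℓ.1, ?_⟩
            by_cases h1 : ℓ = j
            · subst h1; exact hcj
            · rw [hc'other ℓ h1] at hℓ
              exact hℓ.2
          have hsuba : ((univ.erase i).filter fun ℓ => a ℓ < c' ℓ) ⊆
              ((univ.erase i).filter fun ℓ => a ℓ < c ℓ) := by
            intro ℓ hℓ
            rw [mem_filter] at hℓ ⊢
            refine ⟨hℓ.1, ?_⟩
            by_cases h1 : ℓ = j
            · subst h1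
              rw [hc'j] at hℓ
              exact absurd hℓ.2 (lt_irrefl _)
            · rw [hc'other ℓ h1] at hℓ
              exact hℓ.2
          have hjnot : j ∉ ((univ.erase i).filter fun ℓ => c' ℓ < a ℓ) := by
            rw [mem_filter, hc'j]
            simp
          have hjmem : j ∈ ((univ.erase i).filter fun ℓ => c ℓ < a ℓ) :=
            mem_filter.2 ⟨hji, hcj⟩
          have hcard' : (((univ.erase i).filter fun ℓ => c' ℓ < a ℓ).card
              + ((univ.erase i).filter fun ℓ => a ℓ < c' ℓ).card) ≤ N := by
            have h1 : ((univ.erase i).filter fun ℓ => c' ℓ < a ℓ).card ≤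
                ((univ.erase i).filter fun ℓ => c ℓ < a ℓ).card - 1 := by
              have hss := Finset.subset_erase.2 ⟨hsubb, hjnot⟩
              calc _ ≤ (((univ.erase i).filter fun ℓ => c ℓ < a ℓ).erase j).card :=
                    Finset.card_le_card hss
                _ = _ := Finset.card_erase_of_mem hjmem
            have h2 := Finset.card_le_card hsuba
            have h3 := Finset.card_pos.2 ⟨j, hjmem⟩
            omega
          exact le_trans hvall (ih c' hc' hcard')
      · push_neg at hbelow
        exact base c hc hbelow
  exact ⟨b, hbKm, hbdom, fun c hc => key _ c hc (le_refl _)⟩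


lemma K_compact : IsCompact (K n) := by
  have : K n = (Set.pi Set.univ fun _ : Fin n => Set.Icc (0:ℝ) 1) ∩ {a | ∑ j, a j ≤ 1} := by
    ext a
    constructor
    · rintro ⟨h0, h1⟩
      exact ⟨fun j _ => ⟨h0 j, K_le_one ⟨h0, h1⟩ j⟩, h1⟩
    · rintro ⟨hpi, h1⟩
      exact ⟨fun j => (hpi j trivial).1, h1⟩
  rw [this]
  exact (isCompact_univ_pi fun _ => isCompact_Icc).inter_right
    (isClosed_le (continuous_finset_sum _ fun j _ => continuous_apply j) continuous_const)

lemma K_nonempty : (K n).Nonempty := ⟨0, fun j => le_refl 0, by simp⟩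

lemma exists_max_K (g : Fin n → ℝ → ℝ) (hgc : ∀ j, ContinuousOn (g j) (Set.Icc 0 1)) :
    ∃ a ∈ K n, ∀ c ∈ K n, (∑ j, g j (c j)) ≤ ∑ j, g j (a j) := by
  have hco : ContinuousOn (fun c : Fin n → ℝ => ∑ j, g j (c j)) (K n) := by
    apply continuousOn_finset_sum
    intro j _
    exact (hgc j).comp (continuous_apply j).continuousOn
      (fun x hx => ⟨hx.1 j, K_le_one hx j⟩)
  obtain ⟨a, ha, hmax⟩ := K_compact.exists_isMaxOn K_nonempty hco
  exact ⟨a, ha, fun c hc => hmax hc⟩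




-- monotone for t ≥ 0 from strict mono for t > 0 plus continuity in t
lemma mono_ext (v : ℝ → ℝ → ℝ) (Dt : ℝ → ℝ → ℝ)
    (hmono : ∀ t : ℝ, 0 < t → StrictMonoOn (fun a => v a t) (Set.Icc 0 1))
    (hDt : ∀ a ∈ Set.Icc (0:ℝ) 1, ∀ t : ℝ, HasDerivAt (fun s => v a s) (Dt a t) t)
    {t : ℝ} (ht : 0 ≤ t) : MonotoneOn (fun a => v a t) (Set.Icc 0 1) := by
  rcases ht.eq_or_lt with h | h
  · subst h
    intro x hx y hy hxy
    rcases eq_or_lt_of_le hxy with rfl | hlt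
    · exact le_rfl
    · have hx0 : Filter.Tendsto (fun s => v x s) (nhdsWithin 0 (Set.Ioi 0)) (nhds (v x 0)) :=
        ((hDt x hx 0).continuousAt.tendsto).mono_left nhdsWithin_le_nhds
      have hy0 : Filter.Tendsto (fun s => v y s) (nhdsWithin 0 (Set.Ioi 0)) (nhds (v y 0)) :=
        ((hDt y hy 0).continuousAt.tendsto).mono_left nhdsWithin_le_nhds
      refine le_of_tendsto_of_tendsto hx0 hy0 ?_
      filter_upwards [self_mem_nhdsWithin] with s hs
      exact ((hmono s hs) hx hy hlt).le
  · exact (hmono t h).monotoneOn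

-- concave for t ≥ 0
lemma conc_ext (v : ℝ → ℝ → ℝ) (Dt : ℝ → ℝ → ℝ)
    (hconc : ∀ t : ℝ, 0 < t → StrictConcaveOn ℝ (Set.Icc (0:ℝ) 1) (fun a => v a t))
    (hDt : ∀ a ∈ Set.Icc (0:ℝ) 1, ∀ t : ℝ, HasDerivAt (fun s => v a s) (Dt a t) t)
    {t : ℝ} (ht : 0 ≤ t) : ConcaveOn ℝ (Set.Icc (0:ℝ) 1) (fun a => v a t) := by
  rcases ht.eq_or_lt with h | h
  · subst h
    refine ⟨convex_Icc 0 1, ?_⟩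
    intro x hx y hy α β hα hβ hαβ
    have hz : α • x + β • y ∈ Set.Icc (0:ℝ) 1 := (convex_Icc 0 1) hx hy hα hβ hαβ
    have h1 : Filter.Tendsto (fun s => α * v x s + β * v y s)
        (nhdsWithin 0 (Set.Ioi 0)) (nhds (α * v x 0 + β * v y 0)) := by
      exact (((hDt x hx 0).continuousAt.tendsto).const_mul α).add
        (((hDt y hy 0).continuousAt.tendsto).const_mul β) |>.mono_left nhdsWithin_le_nhds
    have h2 : Filter.Tendsto (fun s => v (α • x + β • y) s)
        (nhdsWithin 0 (Set.Ioi 0)) (nhds (v (α • x + β • y) 0)) :=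
      ((hDt _ hz 0).continuousAt.tendsto).mono_left nhdsWithin_le_nhds
    have hle : α * v x 0 + β * v y 0 ≤ v (α • x + β • y) 0 := by
      refine le_of_tendsto_of_tendsto h1 h2 ?_
      filter_upwards [self_mem_nhdsWithin] with s hs
      have := (hconc s hs).concaveOn.2 hx hy hα hβ hαβ
      simpa [smul_eq_mul] using this
    simpa [smul_eq_mul] using hle
  · exact (hconc t h).concaveOn

-- continuity in a
lemma cont_ext (v : ℝ → ℝ → ℝ) (Da : ℝ → ℝ → ℝ)
    (hDa : ∀ a ∈ Set.Icc (0:ℝ) 1, ∀ t : ℝ, HasDerivAt (fun s => v s t) (Da a t) a)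
    (t : ℝ) : ContinuousOn (fun a => v a t) (Set.Icc 0 1) :=
  fun x hx => ((hDa x hx t).continuousAt).continuousWithinAt

lemma m_mono (v : ℝ → ℝ → ℝ) (Da Dt : ℝ → ℝ → ℝ)
    (hmono : ∀ t : ℝ, 0 < t → StrictMonoOn (fun a => v a t) (Set.Icc 0 1))
    (hDt : ∀ a ∈ Set.Icc (0:ℝ) 1, ∀ t : ℝ, HasDerivAt (fun s => v a s) (Dt a t) t)
    (hDa : ∀ a ∈ Set.Icc (0:ℝ) 1, ∀ t : ℝ, HasDerivAt (fun s => v s t) (Da a t) a)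
    (hkey : ∀ a ∈ Set.Icc (0:ℝ) 1, AntitoneOn (fun t => t⁻¹ * Da a t) (Set.Ioi 0))
    {θj l1 l2 : ℝ} (hθ : 0 ≤ θj) (h1 : 0 < l1) (hle : l1 ≤ l2) :
    MonotoneOn (fun x => v x (l1 * θj) / l1 - v x (l2 * θj) / l2) (Set.Icc 0 1) := by
  have h2 : 0 < l2 := lt_of_lt_of_le h1 hle
  rcases hθ.eq_or_lt with h | hθpos
  · -- θj = 0
    rw [← h]
    simp only [mul_zero]
    intro x hx y hy hxy
    have hv := mono_ext v Dt hmono hDt le_rfl hx hy hxy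
    simp only at hv ⊢
    have hdiv : 1/l2 ≤ 1/l1 := one_div_le_one_div_of_le h1 hle
    have e : ∀ z : ℝ, z / l1 - z / l2 = z * (1/l1 - 1/l2) := fun z => by ring
    rw [e (v x 0), e (v y 0)]
    have hc : (0:ℝ) ≤ 1/l1 - 1/l2 := by linarith
    exact mul_le_mul_of_nonneg_right hv hc
  · -- θj > 0
    have ht1 : 0 < l1 * θj := mul_pos h1 hθpos
    have ht2 : 0 < l2 * θj := mul_pos h2 hθpos
    have hle' : l1 * θj ≤ l2 * θj := mul_le_mul_of_nonneg_right hle hθpos.le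
    apply monotoneOn_of_deriv_nonneg (convex_Icc 0 1)
    · exact ((cont_ext v Da hDa (l1 * θj)).div_const l1).sub
        ((cont_ext v Da hDa (l2 * θj)).div_const l2)
    · intro x hx
      rw [interior_Icc] at hx
      have hxI : x ∈ Set.Icc (0:ℝ) 1 := Set.mem_Icc_of_Ioo hx
      exact (((hDa x hxI (l1 * θj)).div_const l1).sub
        ((hDa x hxI (l2 * θj)).div_const l2)).differentiableAt.differentiableWithinAt
    · intro x hx
      rw [interior_Icc] at hx
      have hxI : x ∈ Set.Icc (0:ℝ) 1 := Set.mem_Icc_of_Ioo hx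
      have hd := ((hDa x hxI (l1 * θj)).div_const l1).sub
        ((hDa x hxI (l2 * θj)).div_const l2)
      rw [HasDerivAt.deriv (f := fun x => v x (l1 * θj) / l1 - v x (l2 * θj) / l2) hd]
      have hk := hkey x hxI (Set.mem_Ioi.2 ht1) (Set.mem_Ioi.2 ht2) hle'
      simp only at hk
      have e1 : Da x (l1 * θj) / l1 = θj * ((l1 * θj)⁻¹ * Da x (l1 * θj)) := by
        field_simp
      have e2 : Da x (l2 * θj) / l2 = θj * ((l2 * θj)⁻¹ * Da x (l2 * θj)) := by
        field_simp
      rw [e1, e2]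
      have := mul_le_mul_of_nonneg_left hk hθpos.le
      linarith

end PSscalingAux

open PSscalingAux Finset Filter Topology in
/-- for fixed θ, the map λ ↦ p_S(λθ)/λ is decreasing on (0,∞). -/
theorem pS_scaling {n : ℕ} (hn : 2 ≤ n)
    (vbar : Fin n → ℝ → ℝ → ℝ)  -- vbar i a t
    (Dt : Fin n → ℝ → ℝ → ℝ)    -- ∂ vbar i a t / ∂ t
    (Da : Fin n → ℝ → ℝ → ℝ)    -- ∂ vbar i a t / ∂ a
    (hconc : ∀ i t, 0 < t → StrictConcaveOn ℝ (Set.Icc (0:ℝ) 1) (fun a => vbar i a t))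
    (hmono : ∀ i t, 0 < t → StrictMonoOn (fun a => vbar i a t) (Set.Icc 0 1))
    (hdiff : ∀ i t, 0 < t → ContDiffOn ℝ 1 (fun a => vbar i a t) (Set.Icc 0 1))
    (hDt : ∀ i a t, a ∈ Set.Icc (0:ℝ) 1 → HasDerivAt (fun s => vbar i a s) (Dt i a t) t)
    (hB : ∀ i, ∃ B : ℝ → ℝ, ∀ a ∈ Set.Icc (0:ℝ) 1, ∀ t, |Dt i a t| ≤ B t)
    (hDa : ∀ i a t, a ∈ Set.Icc (0:ℝ) 1 → HasDerivAt (fun s => vbar i s t) (Da i a t) a)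
    (hkey : ∀ i, ∀ a ∈ Set.Icc (0:ℝ) 1, AntitoneOn (fun t => t⁻¹ * Da i a t) (Set.Ioi 0))
    (astar : (Fin n → ℝ) → Fin n → ℝ)
    (hastarfeas : ∀ θ, (∀ j, 0 ≤ astar θ j) ∧ (∑ j, astar θ j) ≤ 1)
    (hastar : ∀ θ : Fin n → ℝ,
      IsGreatest {w | ∃ a : Fin n → ℝ, (∀ j, 0 ≤ a j) ∧ (∑ j, a j) ≤ 1 ∧
        w = ∑ j, vbar j (a j) (θ j)} (∑ j, vbar j (astar θ j) (θ j)))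
    (astarm : Fin n → (Fin n → ℝ) → Fin n → ℝ)
    (hastarmfeas : ∀ i θ, (∀ j, 0 ≤ astarm i θ j) ∧ (∑ j ∈ Finset.univ.erase i, astarm i θ j) ≤ 1)
    (hastarm : ∀ (i : Fin n) (θ : Fin n → ℝ),
      IsGreatest {w | ∃ a : Fin n → ℝ, (∀ j, 0 ≤ a j) ∧ (∑ j ∈ Finset.univ.erase i, a j) ≤ 1 ∧
        w = ∑ j ∈ Finset.univ.erase i, vbar j (a j) (θ j)}
        (∑ j ∈ Finset.univ.erase i, vbar j (astarm i θ j) (θ j)))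
    (hastarmInd : ∀ i θ θ', (∀ j, j ≠ i → θ j = θ' j) → astarm i θ = astarm i θ')
    (pS : (Fin n → ℝ) → ℝ)
    (hpS : ∀ θ, pS θ = -((n : ℝ) - 1) * (∑ j, vbar j (astar θ j) (θ j))
        + ∑ i, ∑ j ∈ Finset.univ.erase i, vbar j (astarm i θ j) (θ j)) :
    ∀ θ : Fin n → ℝ, (∀ j, 0 ≤ θ j) →
      AntitoneOn (fun lam => pS (lam • θ) / lam) (Set.Ioi 0) := by
  intro θ hθ
  intro l1 hl1 l2 hl2 hle
  simp only [Set.mem_Ioi] at hl1 hl2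
  show pS (l2 • θ) / l2 ≤ pS (l1 • θ) / l1
  classical
  set t1 : Fin n → ℝ := l1 • θ with ht1def
  set t2 : Fin n → ℝ := l2 • θ with ht2def
  have ht1j : ∀ j, t1 j = l1 * θ j := fun j => rfl
  have ht2j : ∀ j, t2 j = l2 * θ j := fun j => rfl
  have ht1nn : ∀ j, 0 ≤ t1 j := fun j => by rw [ht1j]; exact mul_nonneg hl1.le (hθ j)
  have ht2nn : ∀ j, 0 ≤ t2 j := fun j => by
    rw [ht2j]; exact mul_nonneg (lt_of_lt_of_le hl1 hle).le (hθ j)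
  have hl2' : 0 < l2 := lt_of_lt_of_le hl1 hle
  have hn' : (0:ℝ) ≤ (n:ℝ) - 1 := by
    have : (2:ℝ) ≤ (n:ℝ) := by exact_mod_cast hn
    linarith
  set MF : Fin n → ℝ → ℝ := fun j x => vbar j x (t1 j) / l1 - vbar j x (t2 j) / l2 with hMF
  set w : ℝ → Fin n → ℝ → ℝ := fun s j x => vbar j x (t2 j) / l2 + s * MF j x with hwdef
  -- basic per-coordinate properties
  have hMmono : ∀ j, MonotoneOn (MF j) (Set.Icc 0 1) := by
    intro j
    have := m_mono (vbar j) (Da j) (Dt j) (fun t ht => hmono j t ht)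
      (fun a ha t => hDt j a t ha) (fun a ha t => hDa j a t ha)
      (fun a ha => hkey j a ha) (hθ j) hl1 hle
    exact this
  have hwcont : ∀ (s : ℝ) (j : Fin n), ContinuousOn (w s j) (Set.Icc 0 1) := by
    intro s j
    have h2 := (cont_ext (vbar j) (Da j) (fun a ha t => hDa j a t ha) (t2 j)).div_const l2
    have h1 := (cont_ext (vbar j) (Da j) (fun a ha t => hDa j a t ha) (t1 j)).div_const l1
    exact h2.add (continuousOn_const.mul (h1.sub h2))
  have hwmono : ∀ s : ℝ, s ∈ Set.Icc (0:ℝ) 1 → ∀ j, MonotoneOn (w s j) (Set.Icc 0 1) := by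
    intro s hs j
    have hv1 := mono_ext (vbar j) (Dt j) (fun t ht => hmono j t ht)
      (fun a ha t => hDt j a t ha) (ht1nn j)
    have hv2 := mono_ext (vbar j) (Dt j) (fun t ht => hmono j t ht)
      (fun a ha t => hDt j a t ha) (ht2nn j)
    intro x hx y hy hxy
    have h1 := hv1 hx hy hxy
    have h2 := hv2 hx hy hxy
    simp only at h1 h2
    have e : ∀ z : ℝ, w s j z = (1-s)/l2 * vbar j z (t2 j) + s/l1 * vbar j z (t1 j) := by
      intro z
      simp only [hwdef, hMF]
      field_simp
      ring
    rw [e x, e y]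
    have hc2 : (0:ℝ) ≤ (1-s)/l2 := div_nonneg (by linarith [hs.2]) hl2'.le
    have hc1 : (0:ℝ) ≤ s/l1 := div_nonneg hs.1 hl1.le
    exact add_le_add (mul_le_mul_of_nonneg_left h2 hc2) (mul_le_mul_of_nonneg_left h1 hc1)
  have hwconc : ∀ s : ℝ, s ∈ Set.Icc (0:ℝ) 1 → ∀ j, ConcaveOn ℝ (Set.Icc (0:ℝ) 1) (w s j) := by
    intro s hs j
    have hv1 := conc_ext (vbar j) (Dt j) (fun t ht => hconc j t ht)
      (fun a ha t => hDt j a t ha) (ht1nn j)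
    have hv2 := conc_ext (vbar j) (Dt j) (fun t ht => hconc j t ht)
      (fun a ha t => hDt j a t ha) (ht2nn j)
    refine ⟨convex_Icc 0 1, ?_⟩
    intro x hx y hy α β hα hβ hαβ
    have h1 := hv1.2 hx hy hα hβ hαβ
    have h2 := hv2.2 hx hy hα hβ hαβ
    simp only [smul_eq_mul] at h1 h2 ⊢
    have e : ∀ z : ℝ, w s j z = (1-s)/l2 * vbar j z (t2 j) + s/l1 * vbar j z (t1 j) := by
      intro z
      simp only [hwdef, hMF]
      field_simp
      ring
    rw [e x, e y, e (α * x + β * y)]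
    have hc2 : (0:ℝ) ≤ (1-s)/l2 := div_nonneg (by linarith [hs.2]) hl2'.le
    have hc1 : (0:ℝ) ≤ s/l1 := div_nonneg hs.1 hl1.le
    nlinarith [mul_le_mul_of_nonneg_left h2 hc2, mul_le_mul_of_nonneg_left h1 hc1]
  -- choose optimizers for every s
  have hex : ∀ s : ℝ, ∃ (A : Fin n → ℝ) (B : Fin n → Fin n → ℝ),
      s ∈ Set.Icc (0:ℝ) 1 →
      A ∈ K n ∧ (∀ c ∈ K n, (∑ j, w s j (c j)) ≤ ∑ j, w s j (A j)) ∧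
      ∀ i : Fin n, B i ∈ Km i ∧ (∀ j, j ≠ i → A j ≤ B i j) ∧
        ∀ c ∈ Km i, (∑ j ∈ univ.erase i, w s j (c j)) ≤ ∑ j ∈ univ.erase i, w s j (B i j) := by
    intro s
    by_cases hs : s ∈ Set.Icc (0:ℝ) 1
    · obtain ⟨A, hA, hAmax⟩ := exists_max_K (w s) (fun j => hwcont s j)
      have hBex : ∀ i : Fin n, ∃ b ∈ Km i, (∀ j, j ≠ i → A j ≤ b j) ∧
          ∀ c ∈ Km i, (∑ j ∈ univ.erase i, w s j (c j)) ≤ ∑ j ∈ univ.erase i, w s j (b j) :=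
        fun i => exists_dominating (w s) (fun j => hwcont s j) (fun j => hwmono s hs j)
          (fun j => hwconc s hs j) i hA hAmax
      choose B hB1 hB2 hB3 using hBex
      exact ⟨A, B, fun _ => ⟨hA, hAmax, fun i => ⟨hB1 i, hB2 i, hB3 i⟩⟩⟩
    · exact ⟨0, fun _ => 0, fun h => absurd h hs⟩
  choose A B hAB using hex
  set Wf : ℝ → ℝ := fun s => ∑ j, w s j (A s j) with hWfdef
  set Wi : ℝ → Fin n → ℝ := fun s i => ∑ j ∈ univ.erase i, w s j (B s i j) with hWidef
  set F : ℝ → ℝ := fun s => (∑ i, Wi s i) - ((n:ℝ) - 1) * Wf s with hFdef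
  set MM : (Fin n → ℝ) → ℝ := fun a => ∑ j, MF j (a j) with hMMdef
  -- step inequality
  have hstep : ∀ s s' : ℝ, s ∈ Set.Icc (0:ℝ) 1 → s' ∈ Set.Icc (0:ℝ) 1 → s ≤ s' →
      ((n:ℝ)-1) * ((s'-s) * (MM (A s) - MM (A s'))) ≤ F s' - F s := by
    intro s s' hs hs' hss
    obtain ⟨hAk, hAmax, hBs⟩ := hAB s hs
    obtain ⟨hAk', hAmax', hBs'⟩ := hAB s' hs'
    have hid : ∀ (j : Fin n) (x : ℝ), w s' j x = w s j x + (s'-s) * MF j x := by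
      intro j x
      simp only [hwdef]
      ring
    have hWfle : Wf s' - Wf s ≤ (s'-s) * MM (A s') := by
      have h1 : (∑ j, w s j (A s' j)) ≤ Wf s := hAmax _ hAk'
      have h2 : Wf s' = (∑ j, w s j (A s' j)) + (s'-s) * MM (A s') := by
        simp only [hWfdef, hMMdef, Finset.mul_sum, ← Finset.sum_add_distrib]
        exact Finset.sum_congr rfl fun j _ => hid j (A s' j)
      linarith
    have hWile : ∀ i, (s'-s) * (∑ j ∈ univ.erase i, MF j (B s i j)) ≤ Wi s' i - Wi s i := by
      intro i
      have h1 : (∑ j ∈ univ.erase i, w s' j (B s i j)) ≤ Wi s' i :=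
        ((hBs' i).2.2) _ ((hBs i).1)
      have h2 : (∑ j ∈ univ.erase i, w s' j (B s i j))
          = Wi s i + (s'-s) * ∑ j ∈ univ.erase i, MF j (B s i j) := by
        simp only [hWidef, Finset.mul_sum, ← Finset.sum_add_distrib]
        exact Finset.sum_congr rfl fun j _ => hid j (B s i j)
      linarith
    have hdom : ∀ i, (∑ j ∈ univ.erase i, MF j (A s j)) ≤ ∑ j ∈ univ.erase i, MF j (B s i j) := by
      intro i
      apply Finset.sum_le_sum
      intro j hj
      have hjne : j ≠ i := Finset.ne_of_mem_erase hj
      exact hMmono j (Set.mem_Icc.2 ⟨hAk.1 j, K_le_one hAk j⟩)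
        (Set.mem_Icc.2 ⟨((hBs i).1).1 j, Km_le_one (hBs i).1 hjne⟩) ((hBs i).2.1 j hjne)
    have hsum_erase : (∑ i, ∑ j ∈ univ.erase i, MF j (A s j)) = ((n:ℝ)-1) * MM (A s) := by
      have he : ∀ i : Fin n, (∑ j ∈ univ.erase i, MF j (A s j)) = MM (A s) - MF i (A s i) := by
        intro i
        have h := Finset.add_sum_erase univ (fun j => MF j (A s j)) (mem_univ i)
        simp only [hMMdef]
        linarith
      rw [Finset.sum_congr rfl (fun i _ => he i), Finset.sum_sub_distrib, Finset.sum_const,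
        card_univ, Fintype.card_fin, nsmul_eq_mul]
      simp only [hMMdef]
      ring
    -- combine
    have hc1 : (s'-s) * (((n:ℝ)-1) * MM (A s)) ≤ ∑ i, (Wi s' i - Wi s i) := by
      calc (s'-s) * (((n:ℝ)-1) * MM (A s))
          = (s'-s) * (∑ i, ∑ j ∈ univ.erase i, MF j (A s j)) := by rw [hsum_erase]
        _ ≤ (s'-s) * (∑ i, ∑ j ∈ univ.erase i, MF j (B s i j)) := by
            apply mul_le_mul_of_nonneg_left _ (by linarith : (0:ℝ) ≤ s' - s)
            exact Finset.sum_le_sum fun i _ => hdom i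
        _ = ∑ i, (s'-s) * (∑ j ∈ univ.erase i, MF j (B s i j)) := by rw [Finset.mul_sum]
        _ ≤ ∑ i, (Wi s' i - Wi s i) := Finset.sum_le_sum fun i _ => hWile i
    have hc2 : ((n:ℝ)-1) * (Wf s' - Wf s) ≤ ((n:ℝ)-1) * ((s'-s) * MM (A s')) :=
      mul_le_mul_of_nonneg_left hWfle hn'
    have hFdiff : F s' - F s = (∑ i, (Wi s' i - Wi s i)) - ((n:ℝ)-1) * (Wf s' - Wf s) := by
      simp only [hFdef, Finset.sum_sub_distrib]
      ring
    rw [hFdiff]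
    nlinarith [hc1, hc2]
  -- endpoints
  have h0mem : (0:ℝ) ∈ Set.Icc (0:ℝ) 1 := ⟨le_rfl, zero_le_one⟩
  have h1mem : (1:ℝ) ∈ Set.Icc (0:ℝ) 1 := ⟨zero_le_one, le_rfl⟩
  have hF0 : F 0 = pS t2 / l2 := by
    obtain ⟨hAk, hAmax, hBs⟩ := hAB 0 h0mem
    have hW0 : ∀ (j : Fin n) (x : ℝ), w 0 j x = vbar j x (t2 j) / l2 := by
      intro j x
      simp only [hwdef]
      ring
    have hAeq : (∑ j, vbar j (A 0 j) (t2 j)) = ∑ j, vbar j (astar t2 j) (t2 j) := by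
      apply le_antisymm
      · exact (hastar t2).2 ⟨A 0, hAk.1, hAk.2, rfl⟩
      · have h := hAmax (astar t2) ⟨(hastarfeas t2).1, (hastarfeas t2).2⟩
        have e1 : (∑ j, w 0 j (astar t2 j)) = (∑ j, vbar j (astar t2 j) (t2 j)) / l2 := by
          rw [Finset.sum_div]
          exact Finset.sum_congr rfl fun j _ => hW0 j (astar t2 j)
        have e2 : (∑ j, w 0 j (A 0 j)) = (∑ j, vbar j (A 0 j) (t2 j)) / l2 := by
          rw [Finset.sum_div]
          exact Finset.sum_congr rfl fun j _ => hW0 j (A 0 j)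
        rw [e1, e2] at h
        exact (div_le_div_iff_of_pos_right hl2').1 h
    have hBeq : ∀ i : Fin n, (∑ j ∈ univ.erase i, vbar j (B 0 i j) (t2 j))
        = ∑ j ∈ univ.erase i, vbar j (astarm i t2 j) (t2 j) := by
      intro i
      apply le_antisymm
      · exact (hastarm i t2).2 ⟨B 0 i, ((hBs i).1).1, ((hBs i).1).2, rfl⟩
      · have h := (hBs i).2.2 (astarm i t2) ⟨(hastarmfeas i t2).1, (hastarmfeas i t2).2⟩
        have e1 : (∑ j ∈ univ.erase i, w 0 j (astarm i t2 j))
            = (∑ j ∈ univ.erase i, vbar j (astarm i t2 j) (t2 j)) / l2 := by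
          rw [Finset.sum_div]
          exact Finset.sum_congr rfl fun j _ => hW0 j (astarm i t2 j)
        have e2 : (∑ j ∈ univ.erase i, w 0 j (B 0 i j))
            = (∑ j ∈ univ.erase i, vbar j (B 0 i j) (t2 j)) / l2 := by
          rw [Finset.sum_div]
          exact Finset.sum_congr rfl fun j _ => hW0 j (B 0 i j)
        rw [e1, e2] at h
        exact (div_le_div_iff_of_pos_right hl2').1 h
    have hWfval : Wf 0 = (∑ j, vbar j (astar t2 j) (t2 j)) / l2 := by
      simp only [hWfdef]
      rw [← hAeq, Finset.sum_div]
      exact Finset.sum_congr rfl fun j _ => hW0 j (A 0 j)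
    have hWival : ∀ i, Wi 0 i = (∑ j ∈ univ.erase i, vbar j (astarm i t2 j) (t2 j)) / l2 := by
      intro i
      simp only [hWidef]
      rw [← hBeq i, Finset.sum_div]
      exact Finset.sum_congr rfl fun j _ => hW0 j (B 0 i j)
    simp only [hFdef]
    rw [hWfval, Finset.sum_congr rfl (fun i _ => hWival i), hpS t2, ← Finset.sum_div]
    ring
  have hF1 : F 1 = pS t1 / l1 := by
    obtain ⟨hAk, hAmax, hBs⟩ := hAB 1 h1mem
    have hW1 : ∀ (j : Fin n) (x : ℝ), w 1 j x = vbar j x (t1 j) / l1 := by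
      intro j x
      simp only [hwdef, hMF]
      ring
    have hAeq : (∑ j, vbar j (A 1 j) (t1 j)) = ∑ j, vbar j (astar t1 j) (t1 j) := by
      apply le_antisymm
      · exact (hastar t1).2 ⟨A 1, hAk.1, hAk.2, rfl⟩
      · have h := hAmax (astar t1) ⟨(hastarfeas t1).1, (hastarfeas t1).2⟩
        have e1 : (∑ j, w 1 j (astar t1 j)) = (∑ j, vbar j (astar t1 j) (t1 j)) / l1 := by
          rw [Finset.sum_div]
          exact Finset.sum_congr rfl fun j _ => hW1 j (astar t1 j)
        have e2 : (∑ j, w 1 j (A 1 j)) = (∑ j, vbar j (A 1 j) (t1 j)) / l1 := by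
          rw [Finset.sum_div]
          exact Finset.sum_congr rfl fun j _ => hW1 j (A 1 j)
        rw [e1, e2] at h
        exact (div_le_div_iff_of_pos_right hl1).1 h
    have hBeq : ∀ i : Fin n, (∑ j ∈ univ.erase i, vbar j (B 1 i j) (t1 j))
        = ∑ j ∈ univ.erase i, vbar j (astarm i t1 j) (t1 j) := by
      intro i
      apply le_antisymm
      · exact (hastarm i t1).2 ⟨B 1 i, ((hBs i).1).1, ((hBs i).1).2, rfl⟩
      · have h := (hBs i).2.2 (astarm i t1) ⟨(hastarmfeas i t1).1, (hastarmfeas i t1).2⟩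
        have e1 : (∑ j ∈ univ.erase i, w 1 j (astarm i t1 j))
            = (∑ j ∈ univ.erase i, vbar j (astarm i t1 j) (t1 j)) / l1 := by
          rw [Finset.sum_div]
          exact Finset.sum_congr rfl fun j _ => hW1 j (astarm i t1 j)
        have e2 : (∑ j ∈ univ.erase i, w 1 j (B 1 i j))
            = (∑ j ∈ univ.erase i, vbar j (B 1 i j) (t1 j)) / l1 := by
          rw [Finset.sum_div]
          exact Finset.sum_congr rfl fun j _ => hW1 j (B 1 i j)
        rw [e1, e2] at h
        exact (div_le_div_iff_of_pos_right hl1).1 h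
    have hWfval : Wf 1 = (∑ j, vbar j (astar t1 j) (t1 j)) / l1 := by
      simp only [hWfdef]
      rw [← hAeq, Finset.sum_div]
      exact Finset.sum_congr rfl fun j _ => hW1 j (A 1 j)
    have hWival : ∀ i, Wi 1 i = (∑ j ∈ univ.erase i, vbar j (astarm i t1 j) (t1 j)) / l1 := by
      intro i
      simp only [hWidef]
      rw [← hBeq i, Finset.sum_div]
      exact Finset.sum_congr rfl fun j _ => hW1 j (B 1 i j)
    simp only [hFdef]
    rw [hWfval, Finset.sum_congr rfl (fun i _ => hWival i), hpS t1, ← Finset.sum_div]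
    ring
  -- telescoping over a grid of mesh 1/N
  have hmain : F 0 ≤ F 1 := by
    have hN : ∀ N : ℕ, 1 ≤ N →
        (((n:ℝ)-1) * (MM (A 0) - MM (A 1))) / N ≤ F 1 - F 0 := by
      intro N hN1
      have hNpos : (0:ℝ) < (N:ℝ) := by
        have : (0:ℕ) < N := hN1
        exact_mod_cast this
      have hgridmem : ∀ k : ℕ, k ≤ N → ((k:ℝ)/(N:ℝ)) ∈ Set.Icc (0:ℝ) 1 := by
        intro k hk
        constructor
        · positivity
        · rw [div_le_one hNpos]
          exact_mod_cast hk
      set φ : ℕ → ℝ := fun k => F ((k:ℝ)/(N:ℝ)) with hφ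
      set ψ : ℕ → ℝ := fun k => MM (A ((k:ℝ)/(N:ℝ))) with hψ
      have hstepk : ∀ k ∈ Finset.range N,
          ((n:ℝ)-1)/(N:ℝ) * (ψ k - ψ (k+1)) ≤ φ (k+1) - φ k := by
        intro k hk
        rw [Finset.mem_range] at hk
        have h1 := hgridmem k hk.le
        have h2 := hgridmem (k+1) hk
        push_cast at h2
        simp only [hφ, hψ]
        push_cast
        have hss : (k:ℝ)/(N:ℝ) ≤ ((k:ℝ)+1)/(N:ℝ) :=
          (div_le_div_iff_of_pos_right hNpos).2 (by linarith)
        have hst := hstep ((k:ℝ)/(N:ℝ)) (((k:ℝ)+1)/(N:ℝ)) h1 h2 hss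
        have hΔ : ((k:ℝ)+1)/(N:ℝ) - (k:ℝ)/(N:ℝ) = 1/(N:ℝ) := by
          field_simp
          ring
        have he : ((n:ℝ)-1)/(N:ℝ) *
            (MM (A ((k:ℝ)/(N:ℝ))) - MM (A (((k:ℝ)+1)/(N:ℝ))))
            = ((n:ℝ)-1) * ((((k:ℝ)+1)/(N:ℝ) - (k:ℝ)/(N:ℝ)) *
              (MM (A ((k:ℝ)/(N:ℝ))) - MM (A (((k:ℝ)+1)/(N:ℝ))))) := by
          rw [hΔ]
          ring
        rw [he]
        exact hst
      have hsum := Finset.sum_le_sum hstepk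
      rw [← Finset.mul_sum, Finset.sum_range_sub' ψ, Finset.sum_range_sub φ] at hsum
      have hφ0 : φ 0 = F 0 := by simp only [hφ]; norm_num
      have hφN : φ N = F 1 := by
        simp only [hφ]
        rw [div_self (ne_of_gt hNpos)]
      have hψ0 : ψ 0 = MM (A 0) := by simp only [hψ]; norm_num
      have hψN : ψ N = MM (A 1) := by
        simp only [hψ]
        rw [div_self (ne_of_gt hNpos)]
      rw [hφ0, hφN, hψ0, hψN] at hsum
      have he2 : (((n:ℝ)-1) * (MM (A 0) - MM (A 1))) / N
          = ((n:ℝ)-1)/(N:ℝ) * (MM (A 0) - MM (A 1)) := by ring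
      rw [he2]
      exact hsum
    have htend : Tendsto (fun N : ℕ => (((n:ℝ)-1) * (MM (A 0) - MM (A 1))) / (N:ℝ))
        atTop (𝓝 0) := tendsto_const_div_atTop_nhds_zero_nat _
    have hge : (0:ℝ) ≤ F 1 - F 0 := by
      refine le_of_tendsto htend ?_
      filter_upwards [Filter.eventually_ge_atTop 1] with N hN1
      exact hN N hN1
    linarith
  rw [hF0, hF1] at hmain
  exact hmain
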